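/- Let α_0,...,α_{n-1} ∈ (0,π) and define intervals I_0 = [α_0, α_0] ⊂ [0,π] and, inductively, I_{i+1} = ⋃_{φ ∈ I_i} [min{φ⊖α_{i+1}, φ⊕α_{i+1}}, max{φ⊖α_{i+1}, φ⊕α_{i+1}}], where α⊕β = min{α+β, 2π−α−β} and α⊖β = |α−β|. Then each I_i is a (closed connected) subinterval of [0,π], and there exists a spherical polygon (u_0,...,u_{n-1}) in S² with d(u_{i−1},u_i) = α_i for all i (indices mod n) if and only if 0 ∈ I_{n-1}. -/

import Mathlib

open Real
open scoped RealInnerProductSpace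
open Fin.NatCast

/-- The spherical (geodesic) distance between unit vectors. -/
noncomputable def sdist (u v : EuclideanSpace ℝ (Fin 3)) : ℝ :=
  Real.arccos ⟪u, v⟫

/-- `α ⊕ β = min {α + β, 2π - (α + β)}`. -/
noncomputable def oplus (a b : ℝ) : ℝ := min (a + b) (2 * π - (a + b))

/-- `α ⊖ β = |α - β|`. -/
def ominus (a b : ℝ) : ℝ := |a - b|

local notation "E3" => EuclideanSpace ℝ (Fin 3)

private lemma arccos_le_arccos' {x y : ℝ} (h : x ≤ y) : arccos y ≤ arccos x := by
  simp only [Real.arccos_eq_pi_div_two_sub_arcsin]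
  have := Real.monotone_arcsin h
  linarith

private lemma ominus_nonneg (a b : ℝ) : 0 ≤ ominus a b := abs_nonneg _

private lemma oplus_le_pi (a b : ℝ) : oplus a b ≤ π := by
  rcases le_total (a + b) π with h | h
  · exact le_trans (min_le_left _ _) h
  · exact le_trans (min_le_right _ _) (by linarith)

private lemma ominus_le_oplus {a b : ℝ} (ha : a ∈ Set.Icc 0 π) (hb : b ∈ Set.Icc 0 π) :
    ominus a b ≤ oplus a b := by
  obtain ⟨ha0, ha1⟩ := ha; obtain ⟨hb0, hb1⟩ := hb
  unfold ominus oplus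
  rw [le_min_iff]
  constructor <;> (rw [abs_le]; constructor <;> linarith)

private lemma ominus_le_pi {a b : ℝ} (ha : a ∈ Set.Icc 0 π) (hb : b ∈ Set.Icc 0 π) :
    ominus a b ≤ π := by
  obtain ⟨ha0, ha1⟩ := ha; obtain ⟨hb0, hb1⟩ := hb
  rw [ominus, abs_le]; constructor <;> linarith

private lemma arccos_cos_eq_min {x : ℝ} (h0 : 0 ≤ x) (h2 : x ≤ 2 * π) :
    arccos (cos x) = min x (2 * π - x) := by
  rcases le_total x π with h | h
  · rw [min_eq_left (by linarith), arccos_cos h0 h]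
  · rw [min_eq_right (by linarith), ← Real.cos_two_pi_sub, arccos_cos (by linarith) (by linarith)]

private lemma cos_oplus (a b : ℝ) : cos (oplus a b) = cos (a + b) := by
  unfold oplus
  rcases le_total (a + b) (2 * π - (a + b)) with h | h
  · rw [min_eq_left h]
  · rw [min_eq_right h, Real.cos_two_pi_sub]

private lemma inner_le_one {u v : E3} (hu : ‖u‖ = 1) (hv : ‖v‖ = 1) :
    ⟪u, v⟫ ∈ Set.Icc (-1 : ℝ) 1 := by
  have h := abs_real_inner_le_norm u v
  rw [hu, hv, mul_one, abs_le] at h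
  exact ⟨h.1, h.2⟩

private lemma cos_sdist {u v : E3} (hu : ‖u‖ = 1) (hv : ‖v‖ = 1) :
    cos (sdist u v) = ⟪u, v⟫ :=
  cos_arccos (inner_le_one hu hv).1 (inner_le_one hu hv).2

private lemma sdist_mem (u v : E3) : sdist u v ∈ Set.Icc 0 π :=
  ⟨arccos_nonneg _, arccos_le_pi _⟩

private lemma sdist_eq_of_inner {u v : E3} {ψ : ℝ} (h0 : 0 ≤ ψ) (hπ : ψ ≤ π)
    (h : ⟪u, v⟫ = cos ψ) : sdist u v = ψ := by
  rw [sdist, h, arccos_cos h0 hπ]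

private lemma sdist_self {u : E3} (hu : ‖u‖ = 1) : sdist u u = 0 := by
  rw [sdist, real_inner_self_eq_norm_sq, hu]
  norm_num

private lemma inner_bound {N v w : E3} (hN : ‖N‖ = 1) (hv : ‖v‖ = 1) (hw : ‖w‖ = 1) :
    |⟪N, w⟫ - ⟪N, v⟫ * ⟪v, w⟫| ≤ Real.sqrt (1 - ⟪N, v⟫ ^ 2) * Real.sqrt (1 - ⟪v, w⟫ ^ 2) := by
  have hvv : ⟪v, v⟫ = (1 : ℝ) := by rw [real_inner_self_eq_norm_sq, hv]; norm_num
  have hNN : ⟪N, N⟫ = (1 : ℝ) := by rw [real_inner_self_eq_norm_sq, hN]; norm_num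
  have hww : ⟪w, w⟫ = (1 : ℝ) := by rw [real_inner_self_eq_norm_sq, hw]; norm_num
  set a := ⟪N, v⟫ with ha
  set b := ⟪v, w⟫ with hb
  have h1 : ⟪v, N⟫ = a := by rw [real_inner_comm]
  have h2 : ⟪w, v⟫ = b := by rw [real_inner_comm]
  have key : ⟪N - a • v, w - b • v⟫ = ⟪N, w⟫ - a * b := by
    simp only [inner_sub_left, inner_sub_right, real_inner_smul_left, real_inner_smul_right,
      hvv, h1, h2]
    ring
  have hN' : ‖N - a • v‖ = Real.sqrt (1 - a ^ 2) := by
    rw [← Real.sqrt_sq (norm_nonneg _), ← real_inner_self_eq_norm_sq]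
    congr 1
    simp only [inner_sub_left, inner_sub_right, real_inner_smul_left, real_inner_smul_right,
      hvv, hNN, h1]
    ring
  have hw' : ‖w - b • v‖ = Real.sqrt (1 - b ^ 2) := by
    rw [← Real.sqrt_sq (norm_nonneg _), ← real_inner_self_eq_norm_sq]
    congr 1
    simp only [inner_sub_left, inner_sub_right, real_inner_smul_left, real_inner_smul_right,
      hvv, hww, h2]
    ring
  calc |⟪N, w⟫ - a * b| = |⟪N - a • v, w - b • v⟫| := by rw [key]
    _ ≤ ‖N - a • v‖ * ‖w - b • v‖ := abs_real_inner_le_norm _ _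
    _ = _ := by rw [hN', hw']

private lemma sdist_triangle_mem {N v w : E3} (hN : ‖N‖ = 1) (hv : ‖v‖ = 1) (hw : ‖w‖ = 1) :
    sdist N w ∈ Set.Icc (ominus (sdist N v) (sdist v w)) (oplus (sdist N v) (sdist v w)) := by
  set φ := sdist N v with hφdef
  set β := sdist v w with hβdef
  obtain ⟨hφ0, hφπ⟩ := sdist_mem N v
  obtain ⟨hβ0, hβπ⟩ := sdist_mem v w
  have ha : ⟪N, v⟫ = cos φ := (cos_sdist hN hv).symm
  have hb : ⟪v, w⟫ = cos β := (cos_sdist hv hw).symm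
  have hsa : Real.sqrt (1 - ⟪N, v⟫ ^ 2) = sin φ := by
    rw [hφdef, sdist, Real.sin_arccos]
  have hsb : Real.sqrt (1 - ⟪v, w⟫ ^ 2) = sin β := by
    rw [hβdef, sdist, Real.sin_arccos]
  have hbd := inner_bound hN hv hw
  rw [hsa, hsb, ha, hb, abs_le] at hbd
  constructor
  · have h1 : ⟪N, w⟫ ≤ cos (ominus φ β) := by
      rw [ominus, Real.cos_abs, Real.cos_sub]
      linarith [hbd.2]
    have h2 := arccos_le_arccos' h1
    rw [arccos_cos (ominus_nonneg _ _) (ominus_le_pi ⟨hφ0, hφπ⟩ ⟨hβ0, hβπ⟩)] at h2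
    exact h2
  · have h1 : cos (φ + β) ≤ ⟪N, w⟫ := by
      rw [Real.cos_add]
      linarith [hbd.1]
    have h2 := arccos_le_arccos' h1
    rw [arccos_cos_eq_min (by linarith) (by linarith)] at h2
    exact h2

private lemma exists_unit_perp (v N : E3) : ∃ x : E3, ‖x‖ = 1 ∧ ⟪v, x⟫ = 0 ∧ ⟪N, x⟫ = 0 := by
  classical
  set K : Submodule ℝ E3 := Submodule.span ℝ ({v, N} : Set E3) with hK
  have hKne : K ≠ ⊤ := by
    intro h
    have hcard : ({v, N} : Finset E3).card ≤ 2 := (Finset.card_insert_le _ _).trans (by simp)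
    have hle := finrank_span_finset_le_card (R := ℝ) ({v, N} : Finset E3)
    have h1 : Module.finrank ℝ K ≤ 2 := by
      have hcoe : ((({v, N} : Finset E3) : Set E3)) = ({v, N} : Set E3) := by simp
      rw [hK, ← hcoe]
      exact le_trans hle hcard
    rw [h, finrank_top] at h1
    have h3 : Module.finrank ℝ E3 = 3 := by simp [finrank_euclideanSpace]
    omega
  have hbot : Kᗮ ≠ ⊥ := fun h => hKne (Submodule.orthogonal_eq_bot_iff.mp h)
  obtain ⟨x, hxK, hx0⟩ := Submodule.exists_mem_ne_zero_of_ne_bot hbot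
  have hv' : ⟪v, x⟫ = 0 :=
    (Submodule.mem_orthogonal K x).mp hxK v (Submodule.subset_span (by simp))
  have hN' : ⟪N, x⟫ = 0 :=
    (Submodule.mem_orthogonal K x).mp hxK N (Submodule.subset_span (by simp))
  refine ⟨‖x‖⁻¹ • x, ?_, ?_, ?_⟩
  · rw [norm_smul, norm_inv, norm_norm, inv_mul_cancel₀ (norm_ne_zero_iff.mpr hx0)]
  · rw [real_inner_smul_right, hv', mul_zero]
  · rw [real_inner_smul_right, hN', mul_zero]

private lemma norm_eq_one_of_inner_self {w : E3} (h : ⟪w, w⟫ = (1 : ℝ)) : ‖w‖ = 1 := by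
  have h2 := real_inner_self_eq_norm_sq w
  rw [h] at h2
  nlinarith [norm_nonneg w]

private lemma hinge_exists {N v : E3} (hN : ‖N‖ = 1) (hv : ‖v‖ = 1) {β ψ : ℝ}
    (hβ : β ∈ Set.Ioo 0 π)
    (hψ : ψ ∈ Set.Icc (ominus (sdist N v) β) (oplus (sdist N v) β)) :
    ∃ w : E3, ‖w‖ = 1 ∧ sdist v w = β ∧ sdist N w = ψ := by
  obtain ⟨hβ0, hβπ⟩ := hβ
  set φ := sdist N v with hφdef
  obtain ⟨hφ0, hφπ⟩ := sdist_mem N v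
  have ha : ⟪N, v⟫ = cos φ := (cos_sdist hN hv).symm
  have hvN : ⟪v, N⟫ = cos φ := by rw [real_inner_comm]; exact ha
  have hψ0 : 0 ≤ ψ := le_trans (ominus_nonneg _ _) hψ.1
  have hψπ : ψ ≤ π := le_trans hψ.2 (oplus_le_pi _ _)
  have hup : cos ψ ≤ cos φ * cos β + sin φ * sin β := by
    have h1 : cos ψ ≤ cos (ominus φ β) :=
      Real.cos_le_cos_of_nonneg_of_le_pi (ominus_nonneg _ _) hψπ hψ.1
    rwa [ominus, Real.cos_abs, Real.cos_sub] at h1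
  have hlo : cos φ * cos β - sin φ * sin β ≤ cos ψ := by
    have h1 : cos (oplus φ β) ≤ cos ψ :=
      Real.cos_le_cos_of_nonneg_of_le_pi hψ0 (oplus_le_pi _ _) hψ.2
    rwa [cos_oplus, Real.cos_add] at h1
  have hsφ : 0 ≤ sin φ := Real.sin_nonneg_of_nonneg_of_le_pi hφ0 hφπ
  have hsβ : 0 < sin β := Real.sin_pos_of_pos_of_lt_pi hβ0 hβπ
  have hvv : ⟪v, v⟫ = (1 : ℝ) := by rw [real_inner_self_eq_norm_sq, hv]; norm_num
  have hNN : ⟪N, N⟫ = (1 : ℝ) := by rw [real_inner_self_eq_norm_sq, hN]; norm_num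
  have hsincos : sin φ ^ 2 + cos φ ^ 2 = 1 := Real.sin_sq_add_cos_sq φ
  obtain ⟨x, hx1, hxv, hxN⟩ := exists_unit_perp v N
  have hxx : ⟪x, x⟫ = (1 : ℝ) := by rw [real_inner_self_eq_norm_sq, hx1]; norm_num
  have hxv2 : ⟪x, v⟫ = 0 := by rw [real_inner_comm]; exact hxv
  have hxN2 : ⟪x, N⟫ = 0 := by rw [real_inner_comm]; exact hxN
  by_cases hs : sin φ = 0
  · -- degenerate case : v = ±N
    have hcψ : cos ψ = cos φ * cos β := by rw [hs] at hup hlo; linarith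
    refine ⟨cos β • v + sin β • x, ?_, ?_, ?_⟩
    · apply norm_eq_one_of_inner_self
      simp only [inner_add_left, inner_add_right, real_inner_smul_left, real_inner_smul_right,
        hvv, hxx, hxv, hxv2]
      nlinarith [Real.sin_sq_add_cos_sq β]
    · apply sdist_eq_of_inner hβ0.le hβπ.le
      simp only [inner_add_right, real_inner_smul_right, hvv, hxv]
      ring
    · apply sdist_eq_of_inner hψ0 hψπ
      simp only [inner_add_right, real_inner_smul_right, ha, hxN]
      rw [hcψ]; ring
  · have hsφ' : 0 < sin φ := lt_of_le_of_ne hsφ (Ne.symm hs)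
    set c : ℝ := (cos ψ - cos φ * cos β) / (sin φ * sin β) with hc
    have hc1 : c ^ 2 ≤ 1 := by
      rw [hc, div_pow, div_le_one (by positivity)]
      nlinarith
    set s : ℝ := Real.sqrt (1 - c ^ 2) with hsdef
    have hs2 : s ^ 2 = 1 - c ^ 2 := Real.sq_sqrt (by linarith)
    set v' : E3 := (sin φ)⁻¹ • (N - cos φ • v) with hv'
    have hvv' : ⟪v, v'⟫ = 0 := by
      rw [hv', real_inner_smul_right, inner_sub_right, real_inner_smul_right, hvN, hvv]
      ring
    have hNv' : ⟪N, v'⟫ = sin φ := by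
      rw [hv', real_inner_smul_right, inner_sub_right, real_inner_smul_right, hNN, ha]
      have h9 : (1 : ℝ) - cos φ * cos φ = sin φ ^ 2 := by linear_combination -hsincos
      rw [h9]
      field_simp
    have hv'v' : ⟪v', v'⟫ = (1 : ℝ) := by
      have hdd : ⟪N - cos φ • v, N - cos φ • v⟫ = sin φ ^ 2 := by
        simp only [inner_sub_left, inner_sub_right, real_inner_smul_left, real_inner_smul_right,
          hNN, hvv, ha, hvN]
        linear_combination -hsincos
      rw [hv', real_inner_smul_left, real_inner_smul_right, hdd]
      field_simp
    have hv'x : ⟪v', x⟫ = 0 := by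
      rw [hv', real_inner_smul_left, inner_sub_left, real_inner_smul_left, hxN, hxv]
      ring
    have hv'v : ⟪v', v⟫ = 0 := by rw [real_inner_comm]; exact hvv'
    have hxv' : ⟪x, v'⟫ = 0 := by rw [real_inner_comm]; exact hv'x
    set w : E3 := cos β • v + (sin β * c) • v' + (sin β * s) • x with hw
    have hvw : ⟪v, w⟫ = cos β := by
      rw [hw]
      simp only [inner_add_right, real_inner_smul_right, hvv, hvv', hxv]
      ring
    have hNw : ⟪N, w⟫ = cos ψ := by
      rw [hw]
      simp only [inner_add_right, real_inner_smul_right, ha, hNv', hxN]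
      have hcmul : c * (sin φ * sin β) = cos ψ - cos φ * cos β :=
        div_mul_cancel₀ _ (by positivity)
      linear_combination hcmul
    have hww : ⟪w, w⟫ = (1 : ℝ) := by
      rw [hw]
      simp only [inner_add_left, inner_add_right, real_inner_smul_left, real_inner_smul_right,
        hvv, hvv', hxv, hv'v, hv'v', hv'x, hxv2, hxv', hxx]
      linear_combination (sin β) ^ 2 * hs2 + Real.sin_sq_add_cos_sq β
    exact ⟨w, norm_eq_one_of_inner_self hww,
      sdist_eq_of_inner hβ0.le hβπ.le hvw, sdist_eq_of_inner hψ0 hψπ hNw⟩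

/-- The inductively defined sets of polar angles: `I 0 = [α 0, α 0]` and
`I (i+1) = ⋃_{φ ∈ I i} [min {φ⊖α(i+1), φ⊕α(i+1)}, max {φ⊖α(i+1), φ⊕α(i+1)}]`. -/
noncomputable def Iiter (α : ℕ → ℝ) : ℕ → Set ℝ
  | 0 => Set.Icc (α 0) (α 0)
  | i + 1 => ⋃ φ ∈ Iiter α i,
      Set.Icc (min (ominus φ (α (i + 1))) (oplus φ (α (i + 1))))
              (max (ominus φ (α (i + 1))) (oplus φ (α (i + 1))))

private lemma Iiter_succ_eq (α : ℕ → ℝ) (i : ℕ)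
    (hsub : Iiter α i ⊆ Set.Icc 0 π) (hβ : α (i + 1) ∈ Set.Icc 0 π) :
    Iiter α (i + 1) =
      ⋃ φ ∈ Iiter α i, Set.Icc (ominus φ (α (i + 1))) (oplus φ (α (i + 1))) := by
  rw [show Iiter α (i + 1) = ⋃ φ ∈ Iiter α i,
      Set.Icc (min (ominus φ (α (i + 1))) (oplus φ (α (i + 1))))
              (max (ominus φ (α (i + 1))) (oplus φ (α (i + 1)))) from rfl]
  ext ψ
  simp only [Set.mem_iUnion, exists_prop]
  constructor
  · rintro ⟨φ, hφ, hm⟩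
    rw [min_eq_left (ominus_le_oplus (hsub hφ) hβ),
        max_eq_right (ominus_le_oplus (hsub hφ) hβ)] at hm
    exact ⟨φ, hφ, hm⟩
  · rintro ⟨φ, hφ, hm⟩
    exact ⟨φ, hφ, by
      rwa [min_eq_left (ominus_le_oplus (hsub hφ) hβ),
           max_eq_right (ominus_le_oplus (hsub hφ) hβ)]⟩

private lemma union_hinge_Icc {a b β : ℝ} (ha : 0 ≤ a) (hab : a ≤ b) (hb : b ≤ π)
    (hβ : β ∈ Set.Icc 0 π) :
    ∃ m M : ℝ, 0 ≤ m ∧ m ≤ M ∧ M ≤ π ∧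
      (⋃ φ ∈ Set.Icc a b, Set.Icc (ominus φ β) (oplus φ β)) = Set.Icc m M := by
  have hne : (Set.Icc a b).Nonempty := Set.nonempty_Icc.mpr hab
  have hcf : Continuous fun φ : ℝ => ominus φ β := by
    unfold ominus; exact (continuous_id.sub continuous_const).abs
  have hcg : Continuous fun φ : ℝ => oplus φ β := by
    unfold oplus
    exact (continuous_id.add continuous_const).min
      (continuous_const.sub (continuous_id.add continuous_const))
  obtain ⟨φ1, hφ1, hmin⟩ := isCompact_Icc.exists_isMinOn hne hcf.continuousOn
  obtain ⟨φ2, hφ2, hmax⟩ := isCompact_Icc.exists_isMaxOn hne hcg.continuousOn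
  have hmem : ∀ φ ∈ Set.Icc a b, φ ∈ Set.Icc 0 π := fun φ hφ =>
    ⟨le_trans ha hφ.1, le_trans hφ.2 hb⟩
  refine ⟨ominus φ1 β, oplus φ2 β, ominus_nonneg _ _, ?_, oplus_le_pi _ _, ?_⟩
  · exact le_trans (ominus_le_oplus (hmem φ1 hφ1) hβ) (hmax hφ1)
  · ext ψ
    simp only [Set.mem_iUnion, exists_prop, Set.mem_Icc]
    constructor
    · rintro ⟨φ, hφ, h1, h2⟩
      exact ⟨le_trans (hmin hφ) h1, le_trans h2 (hmax hφ)⟩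
    · rintro ⟨h1, h2⟩
      by_cases hc : ψ ≤ oplus φ1 β
      · exact ⟨φ1, hφ1, h1, hc⟩
      · push_neg at hc
        have huIcc : Set.uIcc φ1 φ2 ⊆ Set.Icc a b := Set.uIcc_subset_Icc hφ1 hφ2
        have hψmem : ψ ∈ Set.uIcc (oplus φ1 β) (oplus φ2 β) := by
          rw [Set.mem_uIcc]; left; exact ⟨le_of_lt hc, h2⟩
        obtain ⟨φ, hφm, hφeq⟩ :=
          intermediate_value_uIcc (hcg.continuousOn (s := Set.uIcc φ1 φ2)) hψmem
        have hφab : φ ∈ Set.Icc a b := huIcc hφm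
        exact ⟨φ, hφab, by
          rw [← hφeq]; exact ominus_le_oplus (hmem φ hφab) hβ, le_of_eq hφeq.symm⟩

private lemma Iiter_interval (α : ℕ → ℝ) :
    ∀ i, (∀ j ≤ i, α j ∈ Set.Ioo 0 π) →
      ∃ a b : ℝ, 0 ≤ a ∧ a ≤ b ∧ b ≤ π ∧ Iiter α i = Set.Icc a b := by
  intro i
  induction i with
  | zero =>
    intro h
    exact ⟨α 0, α 0, (h 0 le_rfl).1.le, le_rfl, (h 0 le_rfl).2.le, rfl⟩
  | succ i ih =>
    intro h
    obtain ⟨a, b, ha, hab, hb, heq⟩ := ih fun j hj => h j (le_trans hj (Nat.le_succ i))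
    have hβ : α (i + 1) ∈ Set.Icc 0 π := ⟨(h _ le_rfl).1.le, (h _ le_rfl).2.le⟩
    have hsub : Iiter α i ⊆ Set.Icc 0 π := by
      rw [heq]; exact Set.Icc_subset_Icc ha hb
    obtain ⟨m, M, hm, hmM, hM, hU⟩ := union_hinge_Icc ha hab hb hβ
    refine ⟨m, M, hm, hmM, hM, ?_⟩
    rw [Iiter_succ_eq α i hsub hβ, heq, hU]

private lemma Iiter_eq_chain {N : E3} (hN : ‖N‖ = 1) (α : ℕ → ℝ) :
    ∀ i, (∀ j ≤ i, α j ∈ Set.Ioo 0 π) →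
      Iiter α i = {ψ : ℝ | ∃ v : ℕ → E3, (∀ j ≤ i, ‖v j‖ = 1) ∧
        sdist N (v 0) = α 0 ∧ (∀ j < i, sdist (v j) (v (j + 1)) = α (j + 1)) ∧
        sdist N (v i) = ψ} := by
  intro i
  induction i with
  | zero =>
    intro h
    have h0 := h 0 le_rfl
    ext ψ
    simp only [Set.mem_setOf_eq]
    rw [show Iiter α 0 = Set.Icc (α 0) (α 0) from rfl, Set.Icc_self]
    constructor
    · intro hψ
      rw [Set.mem_singleton_iff] at hψ
      subst hψ
      have hNN0 : sdist N N = 0 := sdist_self hN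
      have hmem : α 0 ∈ Set.Icc (ominus (sdist N N) (α 0)) (oplus (sdist N N) (α 0)) := by
        rw [hNN0]
        constructor
        · rw [ominus]; simp [abs_of_nonneg h0.1.le]
        · rw [oplus]
          rcases le_total (0 + α 0) (2 * π - (0 + α 0)) with hle | hle
          · rw [min_eq_left hle]; linarith
          · rw [min_eq_right hle]; linarith [h0.2]
      obtain ⟨w, hw1, hw2, hw3⟩ := hinge_exists hN hN h0 hmem
      exact ⟨fun _ => w, fun _ _ => hw1, hw3, fun j hj => absurd hj (Nat.not_lt_zero j), hw3⟩
    · rintro ⟨v, _, hstart, _, hend⟩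
      rw [Set.mem_singleton_iff, ← hend, hstart]
  | succ i ih =>
    intro h
    have hIH := ih fun j hj => h j (le_trans hj (Nat.le_succ i))
    obtain ⟨a, b, ha, hab, hb, heq⟩ :=
      Iiter_interval α i fun j hj => h j (le_trans hj (Nat.le_succ i))
    have hsub : Iiter α i ⊆ Set.Icc 0 π := by rw [heq]; exact Set.Icc_subset_Icc ha hb
    have hβ := h (i + 1) le_rfl
    have hβm : α (i + 1) ∈ Set.Icc 0 π := ⟨hβ.1.le, hβ.2.le⟩
    rw [Iiter_succ_eq α i hsub hβm]
    ext ψ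
    simp only [Set.mem_iUnion, exists_prop, Set.mem_setOf_eq]
    constructor
    · rintro ⟨φ, hφ, hmem⟩
      rw [hIH] at hφ
      obtain ⟨v, hunit, hstart, hstep, hend⟩ := hφ
      have hmem' : ψ ∈ Set.Icc (ominus (sdist N (v i)) (α (i + 1)))
          (oplus (sdist N (v i)) (α (i + 1))) := by rw [hend]; exact hmem
      obtain ⟨w, hw1, hw2, hw3⟩ := hinge_exists hN (hunit i le_rfl) hβ hmem'
      refine ⟨fun j => if j ≤ i then v j else w, ?_, ?_, ?_, ?_⟩
      · intro j hj
        by_cases hji : j ≤ i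
        · simp only [if_pos hji]; exact hunit j hji
        · simp only [if_neg hji]; exact hw1
      · simp only [if_pos (Nat.zero_le i)]; exact hstart
      · intro j hj
        rcases Nat.lt_succ_iff_lt_or_eq.mp hj with hj' | hj'
        · simp only [if_pos (Nat.le_of_lt hj'), if_pos (Nat.succ_le_of_lt hj')]
          exact hstep j hj'
        · subst hj'
          simp only [if_pos (le_refl j), if_neg (Nat.not_succ_le_self j)]
          exact hw2
      · simp only [if_neg (Nat.not_succ_le_self i)]
        exact hw3
    · rintro ⟨v, hunit, hstart, hstep, hend⟩
      refine ⟨sdist N (v i), ?_, ?_⟩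
      · rw [hIH]
        exact ⟨v, fun j hj => hunit j (le_trans hj (Nat.le_succ i)), hstart,
          fun j hj => hstep j (Nat.lt_succ_of_lt hj), rfl⟩
      · have htri := sdist_triangle_mem hN (hunit i (Nat.le_succ i)) (hunit (i + 1) le_rfl)
        rw [hstep i (Nat.lt_succ_self i)] at htri
        rw [← hend]
        exact htri

/-- Each `Iiter α i` is a nonempty closed subinterval of `[0, π]`, and the angle
sequence `α 0, …, α (n-1) ∈ (0,π)` is realizable by a spherical polygon
`u 0, …, u (n-1)` with `sdist (u (i-1)) (u i) = α i` if and only if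
`0 ∈ Iiter α (n-1)`. -/
theorem spherical_realizable_iff_zero_mem {n : ℕ} [NeZero n]
    (α : ℕ → ℝ) (hα : ∀ i < n, α i ∈ Set.Ioo 0 π) :
    (∀ i < n, ∃ a b : ℝ, 0 ≤ a ∧ a ≤ b ∧ b ≤ π ∧ Iiter α i = Set.Icc a b) ∧
    ((∃ u : Fin n → EuclideanSpace ℝ (Fin 3),
        (∀ i : Fin n, ‖u i‖ = 1) ∧
        ∀ i : Fin n, sdist (u (i - 1)) (u i) = α i.val) ↔
      0 ∈ Iiter α (n - 1)) := by
  have hn : 0 < n := Nat.pos_of_ne_zero (NeZero.ne n)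
  have hα' : ∀ j ≤ n - 1, α j ∈ Set.Ioo 0 π := fun j hj => hα j (by omega)
  have hcast : ((n - 1 : ℕ) : Fin n) = (0 : Fin n) - 1 := by
    apply eq_sub_of_add_eq
    have h1 : ((n - 1 : ℕ) : Fin n) + 1 = ((n - 1 + 1 : ℕ) : Fin n) := by push_cast; ring
    rw [h1, Nat.sub_add_cancel hn, Fin.natCast_self]
  have hcastval : ((0 : Fin n) - 1).val = n - 1 := by
    rw [← hcast]; exact Fin.val_cast_of_lt (by omega)
  constructor
  · intro i hi
    exact Iiter_interval α i fun j hj => hα j (lt_of_le_of_lt hj hi)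
  constructor
  · rintro ⟨u, hu, hd⟩
    set N := u ((0 : Fin n) - 1) with hNdef
    have hN : ‖N‖ = 1 := hu _
    rw [Iiter_eq_chain hN α (n - 1) hα']
    refine ⟨fun j => u ((j : ℕ) : Fin n), fun j _ => hu _, ?_, ?_, ?_⟩
    · have h2 := hd 0
      simp only [Fin.val_zero] at h2
      simpa only [Nat.cast_zero] using h2
    · intro j hj
      have hjn : j + 1 < n := by omega
      have h2 := hd ((j + 1 : ℕ) : Fin n)
      have hval : (((j + 1 : ℕ) : Fin n)).val = j + 1 := Fin.val_cast_of_lt hjn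
      have hsub1 : ((j + 1 : ℕ) : Fin n) - 1 = ((j : ℕ) : Fin n) := by push_cast; simp
      rw [hval, hsub1] at h2
      exact h2
    · show sdist N (u (((n - 1 : ℕ) : Fin n))) = 0
      rw [hcast, ← hNdef]
      exact sdist_self hN
  · intro h0
    set N : E3 := EuclideanSpace.single (2 : Fin 3) (1 : ℝ) with hNdef
    have hN : ‖N‖ = 1 := by rw [hNdef, EuclideanSpace.norm_single]; norm_num
    rw [Iiter_eq_chain hN α (n - 1) hα'] at h0
    obtain ⟨v, hunit, hstart, hstep, hend⟩ := h0
    have hvN : v (n - 1) = N := by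
      have h1 : ⟪N, v (n - 1)⟫ = 1 := by
        rw [sdist] at hend
        have h3 := inner_le_one hN (hunit (n - 1) le_rfl)
        have h4 := Real.arccos_eq_zero.mp hend
        linarith [h3.2]
      exact ((inner_eq_one_iff_of_norm_eq_one hN (hunit _ le_rfl)).mp h1).symm
    refine ⟨fun i => v i.val, fun i => hunit i.val (by have := i.isLt; omega), ?_⟩
    intro i
    obtain ⟨k, hk⟩ := i
    cases k with
    | zero =>
      have hzero : (⟨0, hk⟩ : Fin n) = 0 := Fin.ext (by simp)
      rw [hzero]
      show sdist (v ((0 - 1 : Fin n)).val) (v ((0 : Fin n)).val) = α ((0 : Fin n)).val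
      rw [hcastval, hvN, Fin.val_zero]
      exact hstart
    | succ m =>
      have heqi : (⟨m + 1, hk⟩ : Fin n) = ((m + 1 : ℕ) : Fin n) :=
        (Fin.ext (Fin.val_cast_of_lt hk)).symm
      have hsub1 : ((m + 1 : ℕ) : Fin n) - 1 = ((m : ℕ) : Fin n) := by push_cast; simp
      rw [heqi]
      show sdist (v ((((m + 1 : ℕ) : Fin n) - 1)).val) (v (((m + 1 : ℕ) : Fin n)).val)
        = α (((m + 1 : ℕ) : Fin n)).val
      rw [hsub1, Fin.val_cast_of_lt hk, Fin.val_cast_of_lt (by omega : m < n)]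
      exact hstep m (by omega)
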